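/- Let N be a free-choice net with no isolated places, S a nonempty siphon, Q the maximal trap in S, and M₀ a marking with M₀|Q = 0. Then no transition in post(S) is live at M₀; in particular, since post(S) ≠ ∅, not all transitions are live at M₀. -/
import Mathlib


open Classical

/-- A net: flow from places to transitions (`Fpt`) and transitions to places (`Ftp`). -/
structure Net (P T : Type) where
  Fpt : P → T → Prop
  Ftp : T → P → Prop

namespace Net

variable {P T : Type}

/-- Input places of a transition. -/
def preT (N : Net P T) (t : T) : Set P := {p | N.Fpt p t}
/-- Output places of a transition. -/
def postT (N : Net P T) (t : T) : Set P := {p | N.Ftp t p}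
/-- Transitions producing into a set of places. -/
def preS (N : Net P T) (S : Set P) : Set T := {t | ∃ p ∈ S, N.Ftp t p}
/-- Transitions consuming from a set of places. -/
def postS (N : Net P T) (S : Set P) : Set T := {t | ∃ p ∈ S, N.Fpt p t}
/-- A trap: every transition consuming from `Q` produces into `Q`. -/
def isTrap (N : Net P T) (Q : Set P) : Prop := N.postS Q ⊆ N.preS Q
/-- A siphon: every transition producing into `S` consumes from `S`. -/
def isSiphon (N : Net P T) (S : Set P) : Prop := N.preS S ⊆ N.postS S
/-- The maximal trap contained in `S`: union of all traps inside `S`. -/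
def maxTrap (N : Net P T) (S : Set P) : Set P := ⋃₀ {Q | N.isTrap Q ∧ Q ⊆ S}
/-- Free choice: input-sharing transitions have equal presets. -/
def freeChoice (N : Net P T) : Prop :=
  ∀ t t' : T, (N.preT t ∩ N.preT t').Nonempty → N.preT t = N.preT t'
/-- `t` is enabled at marking `M`. -/
def enabled (N : Net P T) (t : T) (M : P → ℕ) : Prop := ∀ p ∈ N.preT t, 1 ≤ M p
/-- Firing `t` at `M` yields `M'`. -/
def fires (N : Net P T) (t : T) (M M' : P → ℕ) : Prop :=
  N.enabled t M ∧
    ∀ p, M' p = M p - (if p ∈ N.preT t then 1 else 0) + (if p ∈ N.postT t then 1 else 0)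
/-- Reachability: reflexive-transitive closure of single firings. -/
def reach (N : Net P T) : (P → ℕ) → (P → ℕ) → Prop :=
  Relation.ReflTransGen (fun M M' => ∃ t, N.fires t M M')
/-- Firing a whole sequence of transitions. -/
def firesList (N : Net P T) : List T → (P → ℕ) → (P → ℕ) → Prop
  | [], M, M' => M' = M
  | t :: σ, M, M' => ∃ M₁, N.fires t M M₁ ∧ N.firesList σ M₁ M'
/-- `t` is dead at `M`: no reachable marking enables it. -/
def dead (N : Net P T) (t : T) (M : P → ℕ) : Prop :=
  ∀ M', N.reach M M' → ¬ N.enabled t M'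
/-- `t` is live at `M`: it is dead at no reachable marking. -/
def live (N : Net P T) (t : T) (M : P → ℕ) : Prop :=
  ∀ M', N.reach M M' → ¬ N.dead t M'

end Net


section CommonerAux

variable {P T : Type}

theorem Net.maxTrap_subset (N : Net P T) (S : Set P) : N.maxTrap S ⊆ S := by
  rintro p ⟨Q, ⟨_, hQS⟩, hp⟩
  exact hQS hp

theorem Net.maxTrap_isTrap (N : Net P T) (S : Set P) : N.isTrap (N.maxTrap S) := by
  rintro t ⟨p, ⟨Q, ⟨hQtrap, hQS⟩, hpQ⟩, hfpt⟩
  obtain ⟨q, hq, hftq⟩ := hQtrap ⟨p, hpQ, hfpt⟩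
  exact ⟨q, ⟨Q, ⟨hQtrap, hQS⟩, hq⟩, hftq⟩

/-- Any nonempty subset of `S \ maxTrap S` contains a place with a consuming transition
that produces nothing into that subset nor into the maximal trap. -/
theorem commoner_not_trap {N : Net P T} {S : Set P} (X : Set P)
    (hX : X ⊆ S \ N.maxTrap S) (hne : X.Nonempty) :
    ∃ p ∈ X, ∃ v : T, N.Fpt p v ∧ ∀ q ∈ X ∪ N.maxTrap S, ¬ N.Ftp v q := by
  have hnt : ¬ N.isTrap (X ∪ N.maxTrap S) := by
    intro htr
    obtain ⟨p, hp⟩ := hne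
    have hsub : X ∪ N.maxTrap S ⊆ S := by
      rintro q (hq | hq)
      · exact (hX hq).1
      · exact N.maxTrap_subset S hq
    have hin : X ∪ N.maxTrap S ⊆ N.maxTrap S :=
      fun q hq => ⟨X ∪ N.maxTrap S, ⟨htr, hsub⟩, hq⟩
    exact (hX hp).2 (hin (Or.inl hp))
  rw [Net.isTrap, Set.not_subset] at hnt
  obtain ⟨v, hv1, hv2⟩ := hnt
  obtain ⟨c, hc, hfc⟩ := hv1
  have hnp : ∀ q ∈ X ∪ N.maxTrap S, ¬ N.Ftp v q := fun q hq hf => hv2 ⟨q, hq, hf⟩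
  rcases hc with hcX | hcQ
  · exact ⟨c, hcX, v, hfc, hnp⟩
  · exfalso
    obtain ⟨z, hz, hfz⟩ := N.maxTrap_isTrap S ⟨c, hcQ, hfc⟩
    exact hnp z (Or.inr hz) hfz

/-- Existence of a weight function and an allocation on a finite subset of `S \ maxTrap S`. -/
theorem commoner_exists_weights {N : Net P T} {S : Set P} (t0 : T) :
    ∀ X : Finset P, (↑X : Set P) ⊆ S \ N.maxTrap S →
    ∃ (w : P → ℕ) (u : P → T), ∀ p ∈ X,
      N.Fpt p (u p) ∧ (∀ q ∈ N.maxTrap S, ¬ N.Ftp (u p) q) ∧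
      (∑ p' ∈ X.filter (fun p' => N.Ftp (u p) p'), w p') < w p := by
  intro X
  induction X using Finset.strongInduction with
  | _ X ih =>
    intro hXsub
    rcases X.eq_empty_or_nonempty with rfl | hne
    · exact ⟨fun _ => 0, fun _ => t0, by simp⟩
    · obtain ⟨p, hpX, v, hpv, hv⟩ :=
        commoner_not_trap (N := N) (↑X) hXsub (Finset.coe_nonempty.mpr hne)
      have hpX' : p ∈ X := hpX
      obtain ⟨w', u', hw'⟩ := ih (X.erase p) (Finset.erase_ssubset hpX')
        (fun q hq => hXsub (Finset.mem_coe.mpr (Finset.mem_of_mem_erase (Finset.mem_coe.mp hq))))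
      refine ⟨fun q => if q = p then 1 else 2 * w' q, Function.update u' p v, ?_⟩
      intro p'' hp''
      by_cases hpe : p'' = p
      · subst hpe
        simp only [Function.update_self]
        refine ⟨hpv, fun q hq => hv q (Or.inr hq), ?_⟩
        have hempty : X.filter (fun p' => N.Ftp v p') = ∅ := by
          apply Finset.filter_eq_empty_iff.mpr
          intro q hq hfq
          exact hv q (Or.inl (Finset.mem_coe.mpr hq)) hfq
        rw [hempty]
        simp
      · have hup : Function.update u' p v p'' = u' p'' := Function.update_of_ne hpe _ _
        have hp''e : p'' ∈ X.erase p := Finset.mem_erase.mpr ⟨hpe, hp''⟩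
        obtain ⟨h1, h2, h3⟩ := hw' p'' hp''e
        rw [hup]
        refine ⟨h1, h2, ?_⟩
        have hsub2 : X.filter (fun p' => N.Ftp (u' p'') p') ⊆
            insert p ((X.erase p).filter (fun p' => N.Ftp (u' p'') p')) := by
          intro q hq
          rw [Finset.mem_filter] at hq
          by_cases hqp : q = p
          · exact Finset.mem_insert.mpr (Or.inl hqp)
          · exact Finset.mem_insert.mpr (Or.inr (Finset.mem_filter.mpr
              ⟨Finset.mem_erase.mpr ⟨hqp, hq.1⟩, hq.2⟩))
        have hb1 : (∑ q ∈ X.filter (fun p' => N.Ftp (u' p'') p'),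
              (if q = p then 1 else 2 * w' q))
            ≤ ∑ q ∈ insert p ((X.erase p).filter (fun p' => N.Ftp (u' p'') p')),
              (if q = p then 1 else 2 * w' q) :=
          Finset.sum_le_sum_of_subset hsub2
        have hpni : p ∉ (X.erase p).filter (fun p' => N.Ftp (u' p'') p') := by
          simp [Finset.mem_filter]
        rw [Finset.sum_insert hpni] at hb1
        have hcp : (if p = p then 1 else 2 * w' p) = 1 := by simp
        rw [hcp] at hb1
        have hcongr : (∑ q ∈ (X.erase p).filter (fun p' => N.Ftp (u' p'') p'),
              (if q = p then 1 else 2 * w' q))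
            = 2 * ∑ q ∈ (X.erase p).filter (fun p' => N.Ftp (u' p'') p'), w' q := by
          rw [Finset.mul_sum]
          apply Finset.sum_congr rfl
          intro q hq
          have hqp : q ≠ p := (Finset.mem_erase.mp (Finset.mem_filter.mp hq).1).1
          simp [hqp]
        rw [hcongr] at hb1
        simp only [if_neg hpe]
        omega

/-- Path analysis: from a marking with empty maximal trap, any path enabling a transition
consuming from `S` yields an intermediate marking, agreeing with the start on `S`, at which
some transition consuming from `S \ maxTrap S` is enabled. -/
theorem commoner_path {N : Net P T} {S : Set P} (hS : N.isSiphon S) {t : T}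
    (ht : ∃ p ∈ S, N.Fpt p t) :
    ∀ M M₁ : P → ℕ, N.reach M M₁ → N.enabled t M₁ → (∀ q ∈ N.maxTrap S, M q = 0) →
    ∃ M₂, N.reach M M₂ ∧ (∀ p ∈ S, M₂ p = M p) ∧
      ∃ p ∈ S \ N.maxTrap S, ∃ v, N.Fpt p v ∧ N.enabled v M₂ := by
  intro M M₁ hreach hen
  induction hreach using Relation.ReflTransGen.head_induction_on with
  | refl =>
    intro hQ
    obtain ⟨q, hqS, hqt⟩ := ht
    have hq1 : 1 ≤ M₁ q := hen q hqt
    have hqQ : q ∉ N.maxTrap S := fun h => by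
      have := hQ q h; omega
    exact ⟨M₁, Relation.ReflTransGen.refl, fun _ _ => rfl, q, ⟨hqS, hqQ⟩, t, hqt, hen⟩
  | head hstep hrest ihc =>
    rename_i a c
    intro hQ
    obtain ⟨v₀, hf⟩ := hstep
    by_cases hcase : ∃ p, p ∈ S \ N.maxTrap S ∧ N.Fpt p v₀
    · obtain ⟨p, hp, hpv⟩ := hcase
      exact ⟨a, Relation.ReflTransGen.refl, fun _ _ => rfl, p, hp, v₀, hpv, hf.1⟩
    · push_neg at hcase
      have hnpre : ∀ p ∈ S, ¬ N.Fpt p v₀ := by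
        intro p hpS hpv
        by_cases hpQ : p ∈ N.maxTrap S
        · have h1 := hf.1 p hpv
          have h0 := hQ p hpQ
          omega
        · exact hcase p ⟨hpS, hpQ⟩ hpv
      have hnpost : ∀ p ∈ S, ¬ N.Ftp v₀ p := by
        intro p hpS hpv
        obtain ⟨q, hqS, hqv⟩ := hS ⟨p, hpS, hpv⟩
        exact hnpre q hqS hqv
      have hagree : ∀ p ∈ S, c p = a p := by
        intro p hpS
        have h2 := hf.2 p
        have hn1 : p ∉ N.preT v₀ := hnpre p hpS
        have hn2 : p ∉ N.postT v₀ := hnpost p hpS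
        rw [if_neg hn1, if_neg hn2] at h2
        omega
      have hQc : ∀ q ∈ N.maxTrap S, c q = 0 := fun q hq => by
        rw [hagree q (N.maxTrap_subset S hq)]
        exact hQ q hq
      obtain ⟨M₂, hr, hag, rest⟩ := ihc hQc
      exact ⟨M₂, Relation.ReflTransGen.head ⟨v₀, hf⟩ hr,
        fun p hp => (hag p hp).trans (hagree p hp), rest⟩

end CommonerAux

/-- hard direction of Commoner's theorem: if the maximal trap of a
nonempty siphon is unmarked, no transition consuming from the siphon is live. -/
theorem commoner_hard_direction {P T : Type} [Fintype P] [Fintype T]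
    (N : Net P T) (hfc : N.freeChoice)
    (hiso : ∀ p : P, ∃ t : T, p ∈ N.preT t ∨ p ∈ N.postT t)
    (S : Set P) (hSne : S.Nonempty) (hS : N.isSiphon S)
    (M₀ : P → ℕ) (hM₀ : ∀ p ∈ N.maxTrap S, M₀ p = 0) :
    (∀ t ∈ N.postS S, ¬ N.live t M₀) ∧ ∃ t : T, ¬ N.live t M₀ := by
  classical
  have hmain : ∀ t ∈ N.postS S, ¬ N.live t M₀ := by
    intro t ht hlive
    set Rf : Finset P := Finset.univ.filter (fun q => q ∈ S \ N.maxTrap S) with hRf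
    have hRfS : (↑Rf : Set P) ⊆ S \ N.maxTrap S := by
      intro q hq
      exact (Finset.mem_filter.mp (Finset.mem_coe.mp hq)).2
    have hmem : ∀ p, p ∈ S \ N.maxTrap S → p ∈ Rf := by
      intro p hp
      exact Finset.mem_filter.mpr ⟨Finset.mem_univ p, hp⟩
    obtain ⟨w, u, hwu⟩ := commoner_exists_weights (N := N) (S := S) t Rf hRfS
    have ht' : ∃ p ∈ S, N.Fpt p t := ht
    have main : ∀ n : ℕ, ∀ M : P → ℕ, (∀ q ∈ N.maxTrap S, M q = 0) →
        (∑ q ∈ Rf, w q * M q) ≤ n → ¬ N.live t M := by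
      intro n
      induction n using Nat.strong_induction_on with
      | _ n ih =>
        intro M hMQ hmu hliveM
        have hnd : ¬ N.dead t M := hliveM M Relation.ReflTransGen.refl
        rw [Net.dead] at hnd
        push_neg at hnd
        obtain ⟨M₁, hr1, hen1⟩ := hnd
        obtain ⟨M₂, hr2, hag2, p, hpSQ, v, hpv, henv⟩ :=
          commoner_path hS ht' M M₁ hr1 hen1 hMQ
        obtain ⟨h1, h2, h3⟩ := hwu p (hmem p hpSQ)
        have hpre : N.preT v = N.preT (u p) := hfc v (u p) ⟨p, hpv, h1⟩
        have henu : N.enabled (u p) M₂ := by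
          rw [Net.enabled, ← hpre]
          exact henv
        set M₃ : P → ℕ := fun q =>
          M₂ q - (if q ∈ N.preT (u p) then 1 else 0) +
            (if q ∈ N.postT (u p) then 1 else 0) with hM₃
        have hfire : N.fires (u p) M₂ M₃ := ⟨henu, fun q => rfl⟩
        have hr3 : N.reach M M₃ := hr2.tail ⟨u p, hfire⟩
        have hM₃Q : ∀ q ∈ N.maxTrap S, M₃ q = 0 := by
          intro q hq
          have hM₂q : M₂ q = M q := hag2 q (N.maxTrap_subset S hq)
          have hnft : q ∉ N.postT (u p) := h2 q hq
          have h0 : M q = 0 := hMQ q hq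
          simp only [hM₃, if_neg hnft]
          omega
        have key : ∀ q, M₃ q + (if q ∈ N.preT (u p) then 1 else 0)
            = M₂ q + (if q ∈ N.postT (u p) then 1 else 0) := by
          intro q
          by_cases hq : q ∈ N.preT (u p)
          · have h1q := henu q hq
            simp only [hM₃, if_pos hq]
            omega
          · simp only [hM₃, if_neg hq]
            omega
        have hsum : (∑ q ∈ Rf, w q * M₃ q) +
              (∑ q ∈ Rf, w q * (if q ∈ N.preT (u p) then 1 else 0))
            = (∑ q ∈ Rf, w q * M₂ q) +
              (∑ q ∈ Rf, w q * (if q ∈ N.postT (u p) then 1 else 0)) := by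
          rw [← Finset.sum_add_distrib, ← Finset.sum_add_distrib]
          exact Finset.sum_congr rfl fun q _ => by
            rw [← Nat.mul_add, ← Nat.mul_add, key q]
        have hA : w p ≤ ∑ q ∈ Rf, w q * (if q ∈ N.preT (u p) then 1 else 0) := by
          have hle := Finset.single_le_sum
            (f := fun q => w q * (if q ∈ N.preT (u p) then 1 else 0))
            (fun q _ => Nat.zero_le _) (hmem p hpSQ)
          have hpp : p ∈ N.preT (u p) := h1
          simpa [hpp] using hle
        have hB : (∑ q ∈ Rf, w q * (if q ∈ N.postT (u p) then 1 else 0)) < w p := by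
          have heq : (∑ q ∈ Rf, w q * (if q ∈ N.postT (u p) then 1 else 0))
              = ∑ q ∈ Rf.filter (fun q => N.Ftp (u p) q), w q := by
            conv_rhs => rw [Finset.sum_filter]
            refine Finset.sum_congr rfl fun q _ => ?_
            by_cases h : N.Ftp (u p) q
            · simp [Net.postT, h]
            · simp [Net.postT, h]
          rw [heq]
          exact h3
        have hmueq : (∑ q ∈ Rf, w q * M₂ q) = ∑ q ∈ Rf, w q * M q :=
          Finset.sum_congr rfl fun q hq => by
            rw [hag2 q (hRfS (Finset.mem_coe.mpr hq)).1]
        have hdec : (∑ q ∈ Rf, w q * M₃ q) < n := by omega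
        have hlive3 : N.live t M₃ := fun M' h => hliveM M' (hr3.trans h)
        exact ih _ hdec M₃ hM₃Q le_rfl hlive3
    exact main (∑ q ∈ Rf, w q * M₀ q) M₀ hM₀ le_rfl hlive
  refine ⟨hmain, ?_⟩
  obtain ⟨p, hp⟩ := hSne
  obtain ⟨t, htp⟩ := hiso p
  have htS : t ∈ N.postS S := by
    rcases htp with h | h
    · exact ⟨p, hp, h⟩
    · exact hS ⟨p, hp, h⟩
  exact ⟨t, hmain t htS⟩
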